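/- For every integer n > 4, the wheel graph W_n is 2-edge distance-balanced. -/

import Mathlib

open SimpleGraph

/-- Distance from a vertex to an edge (as an unordered pair): the minimum of
the distances to the two endpoints. -/
noncomputable def eDist {V : Type*} (G : SimpleGraph V) (g : V) (f : Sym2 V) : ℕ :=
  Sym2.lift ⟨fun x y => min (G.dist g x) (G.dist g y), fun _ _ => min_comm _ _⟩ f

/-- The number of edges of `G` that are closer to `g` than to `h`. -/
noncomputable def mCloser {V : Type*} (G : SimpleGraph V) (g h : V) : ℕ :=
  {f ∈ G.edgeSet | eDist G g f < eDist G h f}.ncard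

/-- `G` is 2-edge distance-balanced. -/
def TwoEDB {V : Type*} (G : SimpleGraph V) : Prop :=
  ∀ g h : V, G.dist g h = 2 → mCloser G g h = mCloser G h g

/-- The wheel graph `W n` on `n` vertices: a hub vertex `none` adjacent to every rim
vertex, together with a rim cycle on the `n - 1` vertices `some i` (`i : ZMod (n - 1)`),
where rim vertex `i` is adjacent to `i ± 1` (mod `n - 1`). -/
def wheelGraph (n : ℕ) : SimpleGraph (Option (ZMod (n - 1))) where
  Adj x y := x ≠ y ∧
    (x = none ∨ y = none ∨ ∃ i j, x = some i ∧ y = some j ∧ (i = j + 1 ∨ j = i + 1))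
  symm := by
    constructor
    rintro x y ⟨hne, h | h | ⟨i, j, hx, hy, h⟩⟩
    · exact ⟨hne.symm, Or.inr (Or.inl h)⟩
    · exact ⟨hne.symm, Or.inl h⟩
    · exact ⟨hne.symm, Or.inr (Or.inr ⟨j, i, hy, hx, h.symm⟩)⟩
  loopless := by constructor; rintro x ⟨hne, -⟩; exact hne rfl

section Aux

variable {V W : Type*} {G : SimpleGraph V} {G' : SimpleGraph W}

lemma iso_dist_le (e : G ≃g G') (u v : V) : G'.dist (e u) (e v) ≤ G.dist u v := by
  by_cases h : G.Reachable u v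
  · obtain ⟨p, hp⟩ := h.exists_walk_length_eq_dist
    calc G'.dist (e u) (e v) ≤ (p.map e.toHom).length := dist_le _
    _ = p.length := p.length_map _
    _ = G.dist u v := hp
  · rw [dist_eq_zero_of_not_reachable h, dist_eq_zero_of_not_reachable]
    intro hr
    have := hr.map e.symm.toHom
    simp only [Embedding.coe_toHom, RelIso.coe_toRelEmbedding] at this
    simpa using h (by simpa using this)

lemma iso_dist_eq (e : G ≃g G') (u v : V) : G'.dist (e u) (e v) = G.dist u v := by
  refine le_antisymm (iso_dist_le e u v) ?_
  have := iso_dist_le e.symm (e u) (e v)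
  simpa using this

lemma iso_eDist (e : G ≃g G') (u : V) (f : Sym2 V) :
    eDist G' (e u) (f.map e) = eDist G u f := by
  induction f using Sym2.ind with
  | _ x y => simp [eDist, iso_dist_eq]

lemma mCloser_swap (e : G ≃g G) {g h : V} (hg : e g = h) (hh : e h = g) :
    mCloser G g h = mCloser G h g := by
  unfold mCloser
  have himg : (Sym2.map ⇑e) '' {f ∈ G.edgeSet | eDist G g f < eDist G h f}
      = {f ∈ G.edgeSet | eDist G h f < eDist G g f} := by
    ext f
    constructor
    · rintro ⟨f', ⟨hf'E, hf'⟩, rfl⟩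
      refine ⟨(Iso.map_mem_edgeSet_iff e).mpr hf'E, ?_⟩
      rw [← iso_eDist e g f', ← iso_eDist e h f', hg, hh] at hf'
      exact hf'
    · rintro ⟨hfE, hf⟩
      have hmm : Sym2.map ⇑e (Sym2.map ⇑e.symm f) = f := by
        induction f using Sym2.ind with
        | _ x y => simp
      refine ⟨Sym2.map ⇑e.symm f, ⟨?_, ?_⟩, hmm⟩
      · exact (Iso.map_mem_edgeSet_iff e.symm).mpr hfE
      · have hg' : e.symm h = g := by rw [← hg]; exact e.toEquiv.symm_apply_apply g
        have hh' : e.symm g = h := by rw [← hh]; exact e.toEquiv.symm_apply_apply h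
        rw [← iso_eDist e.symm h f, ← iso_eDist e.symm g f, hg', hh'] at hf
        exact hf
  rw [← himg, Set.ncard_image_of_injective _ (Sym2.map.injective e.injective)]

end Aux

theorem wheelGraph_twoEDB (n : ℕ) (hn : 4 < n) : TwoEDB (wheelGraph n) := by
  intro g h hd
  have hub_adj : ∀ b : ZMod (n - 1), (wheelGraph n).Adj none (some b) := by
    intro b
    exact ⟨by simp, Or.inl rfl⟩
  obtain ⟨a, rfl⟩ : ∃ a, g = some a := by
    cases g with
    | none =>
      exfalso
      cases h with
      | none => rw [SimpleGraph.dist_self] at hd; omega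
      | some b =>
        rw [SimpleGraph.dist_eq_one_iff_adj.mpr (hub_adj b)] at hd; omega
    | some a => exact ⟨a, rfl⟩
  obtain ⟨b, rfl⟩ : ∃ b, h = some b := by
    cases h with
    | none =>
      exfalso
      rw [SimpleGraph.dist_comm, SimpleGraph.dist_eq_one_iff_adj.mpr (hub_adj a)] at hd
      omega
    | some b => exact ⟨b, rfl⟩
  set σ : ZMod (n - 1) ≃ ZMod (n - 1) := Equiv.subLeft (a + b) with hσ
  have adj_iff : ∀ x y : Option (ZMod (n - 1)),
      (wheelGraph n).Adj (Equiv.optionCongr σ x) (Equiv.optionCongr σ y) ↔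
        (wheelGraph n).Adj x y := by
    intro x y
    cases x with
    | none =>
      cases y with
      | none => simp [wheelGraph]
      | some j => simp [wheelGraph]
    | some i =>
      cases y with
      | none => simp [wheelGraph]
      | some j =>
        simp only [Equiv.optionCongr_apply, Option.map_some, wheelGraph, hσ,
          Equiv.subLeft_apply, ne_eq, Option.some.injEq, reduceCtorEq, false_or,
          exists_and_left, exists_eq_left']
        constructor
        · rintro ⟨hne, h1 | h1⟩
          · refine ⟨fun hij => hne (by rw [hij]), Or.inr (by linear_combination h1)⟩
          · refine ⟨fun hij => hne (by rw [hij]), Or.inl (by linear_combination h1)⟩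
        · rintro ⟨hne, h1 | h1⟩
          · refine ⟨fun hij => hne (by linear_combination -hij), Or.inr (by linear_combination h1)⟩
          · refine ⟨fun hij => hne (by linear_combination -hij), Or.inl (by linear_combination h1)⟩
  let e : wheelGraph n ≃g wheelGraph n := ⟨Equiv.optionCongr σ, adj_iff _ _⟩
  have hea : e (some a) = some b := by
    simp only [e, RelIso.coe_fn_mk, Equiv.optionCongr_apply, Option.map_some, hσ,
      Equiv.subLeft_apply]
    congr 1
    ring
  have heb : e (some b) = some a := by
    simp only [e, RelIso.coe_fn_mk, Equiv.optionCongr_apply, Option.map_some, hσ,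
      Equiv.subLeft_apply]
    congr 1
    ring
  exact mCloser_swap e hea heb
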